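/- Let ω = (ε + s)/t be an elliptic element with (ε^q + s)(ε + s) = t·t', t' ∈ A, and associated ideal J_ω = tA + (ε + s)A of Ã. Then J_ω·σ(J_ω) = t·Ã; consequently, in the ideal class group Cl(Ã), the class of σ(J_ω) is the inverse of the class of J_ω. -/

import Mathlib

open Matrix Polynomial

open Pointwise in
/-- **Lemma (Section 2).** For an elliptic element `ω = (ε+s)/t` with
`(ε^q+s)(ε+s) = t·t'`, the associated ideal `J_ω = tA + (ε+s)A` of `Ã` satisfies
`J_ω·σ(J_ω) = t·Ã`; consequently in `Cl(Ã)` the class of `σ(J_ω)` is the inverse of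
the class of `J_ω`. -/
theorem stmt_12 (Fq : Type*) [Field Fq] [Fintype Fq] (q : ℕ) (hq : Fintype.card Fq = q)
    (A : Type*) [CommRing A] [IsDomain A] [IsDedekindDomain A] [Algebra Fq A]
    (K : Type*) [Field K] [Algebra A K] [IsFractionRing A K]
    (Kt : Type*) [Field Kt] [Algebra K Kt] [Algebra A Kt] [IsScalarTower A K Kt]
    (ε : Kt) (hε1 : ε ∉ Set.range (algebraMap K Kt)) (hε2 : ε ^ q ^ 2 = ε)
    (hε3 : ε ^ q ≠ ε) (hgen : Algebra.adjoin K {ε} = ⊤)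
    (σ : Kt ≃ₐ[K] Kt) (hσ : σ ε = ε ^ q)
    (hAt : Algebra.adjoin A {ε} = integralClosure A Kt)
    (s t t' : A) (ht : t ≠ 0)
    (heq : (ε ^ q + algebraMap A Kt s) * (ε + algebraMap A Kt s) =
      algebraMap A Kt t * algebraMap A Kt t') :
    -- `J_ω·σ(J_ω) = t·Ã`
    Submodule.span A ({algebraMap A Kt t, ε + algebraMap A Kt s} : Set Kt) *
        Submodule.span A (⇑σ ''
          (Submodule.span A ({algebraMap A Kt t, ε + algebraMap A Kt s} : Set Kt) : Set Kt)) =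
      Submodule.span A ({algebraMap A Kt t} : Set Kt) *
        Subalgebra.toSubmodule (Algebra.adjoin A {ε}) ∧
    -- consequently `[σ(J_ω)] = [J_ω]⁻¹` in `Cl(Ã)`: the product `J_ω·σ(J_ω)` is
    -- equivalent to the unit ideal `Ã`
    ∃ a b : Kt, a ∈ Algebra.adjoin A {ε} ∧ b ∈ Algebra.adjoin A {ε} ∧ a ≠ 0 ∧ b ≠ 0 ∧
      (fun x => a * x) ''
          ((Submodule.span A ({algebraMap A Kt t, ε + algebraMap A Kt s} : Set Kt) *
            Submodule.span A (⇑σ ''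
              (Submodule.span A
                ({algebraMap A Kt t, ε + algebraMap A Kt s} : Set Kt) : Set Kt)) :
            Submodule A Kt) : Set Kt) =
        (fun x => b * x) '' ((Algebra.adjoin A {ε} : Subalgebra A Kt) : Set Kt) := by
  classical
  set f := algebraMap A Kt with hfdef
  have hf : Function.Injective f := by
    rw [hfdef, IsScalarTower.algebraMap_eq A K Kt]
    exact (algebraMap K Kt).injective.comp (IsFractionRing.injective A K)
  set g : Fq →+* Kt := (algebraMap A Kt).comp (algebraMap Fq A) with hgdef
  have hg : Function.Injective g := g.injective
  have hq2 : 1 < q := hq ▸ Fintype.one_lt_card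
  -- Frobenius in `Kt`
  set p := ringChar Fq with hpdef
  haveI hpc : CharP Fq p := ringChar.charP Fq
  haveI hpp : Fact p.Prime := ⟨CharP.char_is_prime Fq p⟩
  obtain ⟨n, -, hn⟩ := FiniteField.card Fq p
  haveI : CharP Kt p := charP_of_injective_ringHom hg p
  rw [hq] at hn
  have frobadd : ∀ x y : Kt, (x + y) ^ q = x ^ q + y ^ q := by
    intro x y; rw [hn]; exact add_pow_char_pow x y p ↑n
  have frobsub : ∀ x y : Kt, (x - y) ^ q = x ^ q - y ^ q := by
    intro x y; rw [hn]; exact sub_pow_char_pow x y ↑n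
  have hεqq : (ε ^ q) ^ q = ε := by rw [← pow_mul, ← pow_two]; exact hε2
  -- the element `ε + ε^q` lies in the image of `Fq`
  have hzq : (ε + ε ^ q) ^ q = ε + ε ^ q := by
    rw [frobadd, hεqq, add_comm]
  have hrange : ε + ε ^ q ∈ Set.range g := by
    by_contra hcon
    have hPne : (X ^ q - X : Kt[X]) ≠ 0 := FiniteField.X_pow_card_sub_X_ne_zero Kt hq2
    have hdeg : (X ^ q - X : Kt[X]).natDegree = q :=
      FiniteField.X_pow_card_sub_X_natDegree_eq Kt hq2
    set Z : Finset Kt := insert (ε + ε ^ q) (Finset.univ.image g) with hZdef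
    have hsub : Z.val ⊆ (X ^ q - X : Kt[X]).roots := by
      intro x hx
      rw [Polynomial.mem_roots hPne]
      have hx' : x = ε + ε ^ q ∨ ∃ a : Fq, g a = x := by
        rcases Finset.mem_insert.1 hx with h | h
        · exact Or.inl h
        · obtain ⟨a, -, ha⟩ := Finset.mem_image.1 h; exact Or.inr ⟨a, ha⟩
      have hxq : x ^ q = x := by
        rcases hx' with rfl | ⟨a, rfl⟩
        · exact hzq
        · rw [← _root_.map_pow]
          congr 1
          rw [← hq]; exact FiniteField.pow_card a
      simp [Polynomial.IsRoot, sub_eq_zero, hxq]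
    have hnotmem : ε + ε ^ q ∉ Finset.univ.image g := by
      intro h
      obtain ⟨a, -, ha⟩ := Finset.mem_image.1 h
      exact hcon ⟨a, ha⟩
    have hcard : Z.card = q + 1 := by
      rw [hZdef, Finset.card_insert_of_notMem hnotmem,
        Finset.card_image_of_injective _ hg, Finset.card_univ, hq]
    have := Polynomial.card_le_degree_of_subset_roots hsub
    rw [hcard, hdeg] at this
    omega
  obtain ⟨c0, hc0⟩ := hrange
  set c : A := algebraMap Fq A c0 with hcdef
  have hc : f c = ε + ε ^ q := hc0
  -- `ε^(q+1)` lies in the image of `A`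
  set d : A := t * t' - s * c - s * s with hddef
  have hd : f d = ε ^ q * ε := by
    rw [hddef, _root_.map_sub, _root_.map_sub, _root_.map_mul, _root_.map_mul, _root_.map_mul,
      ← heq, hc]
    ring
  have hεsq : ε ^ 2 = f c * ε - f d := by rw [hc, hd]; ring
  -- `Ã` as an `A`-module is spanned by `1` and `ε`
  set M : Submodule A Kt := Submodule.span A {1, ε} with hMdef
  have honeM : (1 : Kt) ∈ M := Submodule.subset_span (Set.mem_insert _ _)
  have hεM : ε ∈ M := Submodule.subset_span (Set.mem_insert_of_mem _ rfl)
  have hsmulM : ∀ (a b : A), a • (1 : Kt) + b • ε ∈ M := fun a b =>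
    Submodule.mem_span_pair.2 ⟨a, b, rfl⟩
  have hε2M : ε * ε ∈ M := by
    have : ε * ε = (-d) • (1 : Kt) + c • ε := by
      rw [Algebra.smul_def, Algebra.smul_def, _root_.map_neg]
      have := hεsq; rw [pow_two] at this; rw [this]; ring
    rw [this]; exact hsmulM _ _
  have hMM : M * M ≤ M := by
    rw [hMdef, Submodule.span_mul_span]
    rw [Submodule.span_le]
    rintro x ⟨a, ha, b, hb, rfl⟩
    rcases ha with rfl | ha <;> rcases hb with rfl | hb
    · simpa using honeM
    · rw [Set.mem_singleton_iff] at hb; subst hb; simpa using hεM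
    · rw [Set.mem_singleton_iff] at ha; subst ha; simpa using hεM
    · rw [Set.mem_singleton_iff] at ha hb; subst ha; subst hb; exact hε2M
  have hM : Subalgebra.toSubmodule (Algebra.adjoin A {ε}) = M := by
    apply le_antisymm
    · have : Algebra.adjoin A {ε} ≤ M.toSubalgebra honeM (fun x y hx hy => hMM
        (Submodule.mul_mem_mul hx hy)) := by
        rw [Algebra.adjoin_le_iff]
        intro x hx
        rw [Set.mem_singleton_iff] at hx; subst hx
        exact hεM
      exact this
    · rw [hMdef, Submodule.span_le]
      rintro x (rfl | hx)
      · exact (Algebra.adjoin A {ε}).one_mem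
      · rw [Set.mem_singleton_iff] at hx; subst hx
        exact Algebra.subset_adjoin rfl
  -- `σ` fixes the image of `A` and is `A`-linear
  have hσf : ∀ a : A, σ (f a) = f a := by
    intro a
    rw [hfdef, IsScalarTower.algebraMap_apply A K Kt]
    exact σ.commutes _
  have hσsmul : ∀ (a : A) (x : Kt), σ (a • x) = a • σ x := by
    intro a x
    rw [Algebra.smul_def, _root_.map_mul, hσf, ← Algebra.smul_def]
  set σA : Kt →ₗ[A] Kt :=
    { toFun := σ, map_add' := _root_.map_add σ, map_smul' := hσsmul } with hσAdef
  set J1 : Submodule A Kt := Submodule.span A {f t, ε + f s} with hJ1def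
  set J2 : Submodule A Kt := Submodule.span A {f t, ε ^ q + f s} with hJ2def
  have hσJ : Submodule.span A (⇑σ '' (J1 : Set Kt)) = J2 := by
    have h1 : ⇑σ '' (J1 : Set Kt) = ↑(J1.map σA) := (Submodule.map_coe σA J1).symm
    rw [h1, Submodule.span_eq, hJ1def, Submodule.map_span]
    have h2 : ⇑σA '' {f t, ε + f s} = {f t, ε ^ q + f s} := by
      rw [Set.image_pair]
      have e1 : σA (f t) = f t := hσf t
      have e2 : σA (ε + f s) = ε ^ q + f s := by
        show σ (ε + f s) = _
        rw [_root_.map_add, hσ, hσf]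
      rw [e1, e2]
    rw [h2]
  -- membership facts
  have hftJ1 : f t ∈ J1 := Submodule.subset_span (Set.mem_insert _ _)
  have hεsJ1 : ε + f s ∈ J1 := Submodule.subset_span (Set.mem_insert_of_mem _ rfl)
  have hftJ2 : f t ∈ J2 := Submodule.subset_span (Set.mem_insert _ _)
  have hεqsJ2 : ε ^ q + f s ∈ J2 := Submodule.subset_span (Set.mem_insert_of_mem _ rfl)
  have hftM : f t ∈ M := by
    have : f t = t • (1 : Kt) + (0 : A) • ε := by simp [Algebra.smul_def, hfdef]
    rw [this]; exact hsmulM _ _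
  have hft'M : f t' ∈ M := by
    have : f t' = t' • (1 : Kt) + (0 : A) • ε := by simp [Algebra.smul_def, hfdef]
    rw [this]; exact hsmulM _ _
  have hεsM : ε + f s ∈ M := by
    have : ε + f s = s • (1 : Kt) + (1 : A) • ε := by simp [Algebra.smul_def]; ring
    rw [this]; exact hsmulM _ _
  have hεqsM : ε ^ q + f s ∈ M := by
    have : ε ^ q + f s = (c + s) • (1 : Kt) + (-1 : A) • ε := by
      rw [Algebra.smul_def, Algebra.smul_def, _root_.map_add, _root_.map_neg, _root_.map_one, hc]; ring
    rw [this]; exact hsmulM _ _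
  have hftT : f t ∈ Submodule.span A ({f t} : Set Kt) := Submodule.subset_span rfl
  -- the key unit
  set v : A := (c + 2 * s) * (c + 2 * s) - 4 * (t * t') with hvdef
  have h2lit : (f 2 : Kt) = 2 := by rw [_root_.map_ofNat]
  have h4lit : (f 4 : Kt) = 4 := by rw [_root_.map_ofNat]
  have hfv : f v = (ε - ε ^ q) ^ 2 := by
    have h1 : f (t * t') = (ε ^ q + f s) * (ε + f s) := by
      rw [_root_.map_mul]; exact heq.symm
    rw [hvdef, _root_.map_sub, _root_.map_mul, _root_.map_mul, h1, _root_.map_add,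
      _root_.map_mul, hc, h2lit, h4lit]
    ring
  have hune : ε - ε ^ q ≠ 0 := sub_ne_zero.2 (Ne.symm hε3)
  have huq : (ε - ε ^ q) ^ q = -(ε - ε ^ q) := by
    rw [frobsub, hεqq]; ring
  have hu1 : (ε - ε ^ q) ^ (q - 1) = -1 := by
    have h : (ε - ε ^ q) ^ (q - 1) * (ε - ε ^ q) = -1 * (ε - ε ^ q) := by
      rw [← pow_succ]
      have : q - 1 + 1 = q := by omega
      rw [this, huq]; ring
    exact mul_right_cancel₀ hune h
  have hv1 : v ^ (q - 1) = 1 := by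
    apply hf
    rw [_root_.map_pow, _root_.map_one, hfv, ← pow_mul, mul_comm 2 (q - 1), pow_mul, hu1]
    ring
  have hvw : v * v ^ (q - 2) = 1 := by
    rw [← pow_succ']
    have : q - 2 + 1 = q - 1 := by omega
    rw [this, hv1]
  -- the product `P := J1 * J2`
  set P : Submodule A Kt := J1 * J2 with hPdef
  have e1 : f t * (ε ^ q + f s) ∈ P := Submodule.mul_mem_mul hftJ1 hεqsJ2
  have e2 : (ε + f s) * f t ∈ P := Submodule.mul_mem_mul hεsJ1 hftJ2
  have e3 : f t * f t ∈ P := Submodule.mul_mem_mul hftJ1 hftJ2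
  have e4 : (ε + f s) * (ε ^ q + f s) ∈ P := Submodule.mul_mem_mul hεsJ1 hεqsJ2
  have h5 : f (t * (c + 2 * s)) ∈ P := by
    have : f (t * (c + 2 * s)) = f t * (ε ^ q + f s) + (ε + f s) * f t := by
      rw [_root_.map_mul, _root_.map_add, _root_.map_mul, hc, h2lit]; ring
    rw [this]; exact add_mem e1 e2
  have h6 : f (t * t') ∈ P := by
    have : f (t * t') = (ε + f s) * (ε ^ q + f s) := by
      rw [_root_.map_mul, ← heq]; ring
    rw [this]; exact e4
  have h7 : f (t * v) ∈ P := by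
    have : f (t * v) = (c + 2 * s) • f (t * (c + 2 * s)) - (4 * t) • f (t * t') := by
      rw [Algebra.smul_def, Algebra.smul_def, ← _root_.map_mul, ← _root_.map_mul, ← _root_.map_sub]
      congr 1
      rw [hvdef]; ring
    rw [this]
    exact sub_mem (Submodule.smul_mem P _ h5) (Submodule.smul_mem P _ h6)
  have hftP : f t ∈ P := by
    have : f t = v ^ (q - 2) • f (t * v) := by
      rw [Algebra.smul_def, ← _root_.map_mul]
      congr 1
      calc t = t * (v * v ^ (q - 2)) := by rw [hvw, mul_one]
        _ = v ^ (q - 2) * (t * v) := by ring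
    rw [this]; exact Submodule.smul_mem P _ h7
  have hftεP : f t * ε ∈ P := by
    have : f t * ε = (ε + f s) * f t - s • f t := by
      rw [Algebra.smul_def]; ring
    rw [this]; exact sub_mem e2 (Submodule.smul_mem P _ hftP)
  -- main equality
  have main : P = Submodule.span A ({f t} : Set Kt) * M := by
    apply le_antisymm
    · rw [hPdef, hJ1def, hJ2def, Submodule.span_mul_span, Submodule.span_le]
      rintro x ⟨a, ha, b, hb, rfl⟩
      rcases ha with rfl | ha <;> rcases hb with rfl | hb
      · exact Submodule.mul_mem_mul hftT hftM
      · rw [Set.mem_singleton_iff] at hb; subst hb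
        exact Submodule.mul_mem_mul hftT hεqsM
      · rw [Set.mem_singleton_iff] at ha; subst ha
        show (ε + f s) * f t ∈ (Submodule.span A ({f t} : Set Kt) * M : Submodule A Kt)
        rw [mul_comm (ε + f s) (f t)]
        exact Submodule.mul_mem_mul hftT hεsM
      · rw [Set.mem_singleton_iff] at ha hb; subst ha; subst hb
        show (ε + f s) * (ε ^ q + f s) ∈ (Submodule.span A ({f t} : Set Kt) * M : Submodule A Kt)
        have hee : (ε + f s) * (ε ^ q + f s) = f t * f t' := by rw [← heq]; ring
        rw [hee]
        exact Submodule.mul_mem_mul hftT hft'M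
    · rw [hMdef, Submodule.span_mul_span, Submodule.span_le]
      rintro x ⟨a, ha, b, hb, rfl⟩
      rw [Set.mem_singleton_iff] at ha; subst ha
      rcases hb with rfl | hb
      · simpa using hftP
      · rw [Set.mem_singleton_iff] at hb; subst hb
        exact hftεP
  have main' : J1 * Submodule.span A (⇑σ '' (J1 : Set Kt)) =
      Submodule.span A ({f t} : Set Kt) * Subalgebra.toSubmodule (Algebra.adjoin A {ε}) := by
    rw [hσJ, hM]; exact main
  refine ⟨main', 1, f t, one_mem _, ?_, one_ne_zero, ?_, ?_⟩
  · exact Subalgebra.algebraMap_mem _ t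
  · intro h
    exact ht (hf (by rw [h, _root_.map_zero]))
  · have him1 : (fun x : Kt => (1 : Kt) * x) = id := funext one_mul
    rw [him1, Set.image_id]
    have : ((J1 * Submodule.span A (⇑σ '' (J1 : Set Kt)) : Submodule A Kt) : Set Kt) =
        ((Submodule.span A ({f t} : Set Kt) *
          Subalgebra.toSubmodule (Algebra.adjoin A {ε}) : Submodule A Kt) : Set Kt) := by
      rw [main']
    rw [this, Submodule.span_singleton_mul, Submodule.coe_pointwise_smul]
    ext x
    simp only [Set.mem_smul_set, Set.mem_image, smul_eq_mul, Subalgebra.coe_toSubmodule,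
      SetLike.mem_coe]
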